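/- Let F = F_4 = F_2(ω) where ω² + ω + 1 = 0, and let R = F[x]/(x⁵ − ω). Let C be the F[x]-submodule of R × R generated by the single element g = (x + x² + x³ + ω²x⁴, 1 + ωx² + ωx³ + ω²x⁴). Then, identifying R × R with F^10 blockwise via coefficients: (i) dim_F C = 5; (ii) C ∩ C^⊥ = {0}, i.e., C is LCD; and (iii) π_1(C) = π_2(C) = R, i.e., both projections are the unit ideal (equivalently, gcd(x + x² + x³ + ω²x⁴, x⁵ − ω) = 1 and gcd(1 + ωx² + ωx³ + ω²x⁴, x⁵ − ω) = 1 in F[x]). In particular the pairwise-coprimality hypothesis (x⁵ − ω)/g_1 coprime to (x⁵ − ω)/g_2 fails for C, yet C is LCD, so that hypothesis is sufficient but not necessary for an MT code to be LCD. -/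

import Mathlib

/-!
STATEMENT 16: Over F₄ = F₂(ω), let R = F[x]/(x⁵ − ω) and let C ⊆ R × R be the
F[x]-submodule generated by g = (x + x² + x³ + ω²x⁴, 1 + ωx² + ωx³ + ω²x⁴).
Then dim_F C = 5, C is LCD (in coefficient form via the blockwise identification),
and both projections of C are the unit ideal (equivalently, both components of g are
coprime to x⁵ − ω).
-/

open Polynomial

variable (F : Type*) [Field F] (ω : F)

/-- The block polynomial `x⁵ − ω`. -/
noncomputable def fpoly : Polynomial F := X ^ 5 - Polynomial.C ω

/-- The block ring `R = F[x]/(x⁵ − ω)`. -/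
noncomputable abbrev R := Polynomial F ⧸ Ideal.span {fpoly F ω}

/-- The generator `g = (x + x² + x³ + ω²x⁴, 1 + ωx² + ωx³ + ω²x⁴)` of `C`. -/
noncomputable def gel : R F ω × R F ω :=
  (Ideal.Quotient.mk _ (X + X ^ 2 + X ^ 3 + Polynomial.C (ω ^ 2) * X ^ 4),
   Ideal.Quotient.mk _ (1 + Polynomial.C ω * X ^ 2 + Polynomial.C ω * X ^ 3
      + Polynomial.C (ω ^ 2) * X ^ 4))

/-- The code `C`: the `F[x]`-submodule of `R × R` generated by `g`. -/
noncomputable def Ccode : Submodule (Polynomial F) (R F ω × R F ω) :=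
  Submodule.span (Polynomial F) {gel F ω}

/-- The blockwise coefficient identification of `F¹⁰` with `R × R`. -/
noncomputable def blk (a : Fin 10 → F) : R F ω × R F ω :=
  (Ideal.Quotient.mk _
      (∑ k : Fin 5, Polynomial.C (a ⟨(k : ℕ), by have := k.isLt; omega⟩) * X ^ (k : ℕ)),
   Ideal.Quotient.mk _
      (∑ k : Fin 5, Polynomial.C (a ⟨5 + (k : ℕ), by have := k.isLt; omega⟩) * X ^ (k : ℕ)))


set_option maxHeartbeats 2000000

lemma sum10 {M : Type*} [AddCommMonoid M] (f : Fin 10 → M) :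
    ∑ k : Fin 10, f k = f 0 + f 1 + f 2 + f 3 + f 4 + f 5 + f 6 + f 7 + f 8 + f 9 := by
  simp [Fin.sum_univ_succ, add_assoc]

lemma aux_unique (F : Type*) [Field F] (ω : F) {P Q : Polynomial F}
    (hP : P.degree ≤ 4) (hQ : Q.degree ≤ 4)
    (h : Ideal.Quotient.mk (Ideal.span {fpoly F ω}) P = Ideal.Quotient.mk (Ideal.span {fpoly F ω}) Q) :
    P = Q := by
  have hd : fpoly F ω ∣ P - Q := Ideal.mem_span_singleton.mp (Ideal.Quotient.eq.mp h)
  by_contra hne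
  have hsub : P - Q ≠ 0 := sub_ne_zero.mpr hne
  have h5 : (fpoly F ω).degree = 5 := by
    rw [fpoly]; exact Polynomial.degree_X_pow_sub_C (by norm_num) ω
  have hle := Polynomial.degree_le_of_dvd hd hsub
  rw [h5] at hle
  have h7 : (P - Q).degree ≤ 4 := le_trans (Polynomial.degree_sub_le P Q) (max_le hP hQ)
  have hcon : (5 : WithBot ℕ) ≤ 4 := le_trans hle h7
  norm_num at hcon

theorem stmt16 [Fintype F] (hcard : Fintype.card F = 4) (hω : ω ^ 2 + ω + 1 = 0) :
    -- (i) dim_F C = 5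
    Module.finrank F (Submodule.restrictScalars F (Ccode F ω)) = 5 ∧
    -- (ii) C is LCD: C ∩ C^⊥ = {0}
    (∀ a : Fin 10 → F, blk F ω a ∈ Ccode F ω →
      (∀ b : Fin 10 → F, blk F ω b ∈ Ccode F ω → ∑ k : Fin 10, a k * b k = 0) →
      a = 0) ∧
    -- (iii) both projections are the unit ideal …
    Submodule.map (LinearMap.fst (Polynomial F) (R F ω) (R F ω)) (Ccode F ω) = ⊤ ∧
    Submodule.map (LinearMap.snd (Polynomial F) (R F ω) (R F ω)) (Ccode F ω) = ⊤ ∧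
    -- … equivalently, both components of g are coprime to x⁵ − ω
    IsCoprime (X + X ^ 2 + X ^ 3 + Polynomial.C (ω ^ 2) * X ^ 4) (fpoly F ω) ∧
    IsCoprime (1 + Polynomial.C ω * X ^ 2 + Polynomial.C ω * X ^ 3
        + Polynomial.C (ω ^ 2) * X ^ 4) (fpoly F ω) := by
  have h4 : (4 : F) = 0 := by
    have hc := FiniteField.cast_card_eq_zero F
    rw [hcard] at hc; exact_mod_cast hc
  have h2 : (2 : F) = 0 := by
    have h22 : (2 : F) * 2 = 0 := by linear_combination h4
    rcases mul_eq_zero.mp h22 with h | h <;> exact h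
  have hwX : (Polynomial.C ω) ^ 2 + Polynomial.C ω + 1 = (0 : Polynomial F) := by
    have h := congrArg Polynomial.C hω; simpa using h
  have h2X : (2 : Polynomial F) = 0 := by
    have h := congrArg Polynomial.C h2; rwa [map_ofNat, map_zero] at h
  have hu1A : (Ideal.Quotient.mk (Ideal.span {fpoly F ω}) ((X + X^2 + X^3 + (Polynomial.C ω) + (Polynomial.C ω)*X^2 + (Polynomial.C ω)*X^3) * (X + X ^ 2 + X ^ 3 + Polynomial.C (ω ^ 2) * X ^ 4 : Polynomial F)) : R F ω) = Ideal.Quotient.mk (Ideal.span {fpoly F ω}) 1 := by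
    rw [Ideal.Quotient.eq, Ideal.mem_span_singleton']
    refine ⟨(1 + X + (Polynomial.C ω) + (Polynomial.C ω)*X^2), ?_⟩
    simp only [fpoly, map_pow, map_add, map_mul, map_one, map_zero]
    linear_combination ((-1) + (-1)*X^2 + X^4 + (-1)*X^5 + (-1)*(Polynomial.C ω)*X^4 + (-1)*(Polynomial.C ω)*X^6 + (-1)*(Polynomial.C ω)*X^7) * hwX + (1 + (-1)*X^3 + (-2)*X^4 + (-1)*(Polynomial.C ω)*X + (-1)*(Polynomial.C ω)*X^3 + (-1)*(Polynomial.C ω)*X^4 + (Polynomial.C ω)*X^7) * h2X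
  have hBs : (Ideal.Quotient.mk (Ideal.span {fpoly F ω}) (1 + Polynomial.C ω * X ^ 2 + Polynomial.C ω * X ^ 3 + Polynomial.C (ω ^ 2) * X ^ 4 : Polynomial F) : R F ω) = Ideal.Quotient.mk (Ideal.span {fpoly F ω}) ((1 + X^2 + (Polynomial.C ω) + (Polynomial.C ω)*X^2 + (Polynomial.C ω)*X^3 + (Polynomial.C ω)*X^4) * (X + X ^ 2 + X ^ 3 + Polynomial.C (ω ^ 2) * X ^ 4 : Polynomial F)) := by
    rw [Ideal.Quotient.eq, Ideal.mem_span_singleton']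
    refine ⟨(1 + X^2 + X^3 + (Polynomial.C ω) + (Polynomial.C ω)*X + (Polynomial.C ω)*X^2), ?_⟩
    simp only [fpoly, map_pow, map_add, map_mul, map_one, map_zero]
    linear_combination ((-1) + (-1)*X + (-1)*X^2 + (-1)*X^4 + (-1)*X^7 + (-1)*X^8 + (Polynomial.C ω)*X^4 + (Polynomial.C ω)*X^6 + (Polynomial.C ω)*X^7 + (Polynomial.C ω)*X^8) * hwX + (X + X^2 + X^3 + X^4 + X^5 + X^7 + X^8 + (Polynomial.C ω)*X + (Polynomial.C ω)*X^4 + 2*(Polynomial.C ω)*X^5 + (Polynomial.C ω)*X^6 + (Polynomial.C ω)*X^7) * h2X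
  refine ⟨?_, ?_, ?_, ?_, ?_, ?_⟩
  · -- dimension
    have hfne : fpoly F ω ≠ 0 := by
      rw [fpoly]; exact Polynomial.X_pow_sub_C_ne_zero (by norm_num) ω
    let φ : R F ω →ₗ[F] R F ω × R F ω :=
      { toFun := fun r => (r, Ideal.Quotient.mk (Ideal.span {fpoly F ω}) (1 + X^2 + (Polynomial.C ω) + (Polynomial.C ω)*X^2 + (Polynomial.C ω)*X^3 + (Polynomial.C ω)*X^4) * r)
        map_add' := fun x y => by simp [mul_add, Prod.ext_iff]
        map_smul' := fun c x => by simp [Prod.ext_iff, mul_smul_comm] }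
    have hinj : Function.Injective φ := fun x y h => congrArg Prod.fst h
    have hre : Submodule.restrictScalars F (Ccode F ω) = LinearMap.range φ := by
      apply le_antisymm
      · intro x hx
        obtain ⟨p, rfl⟩ := Submodule.mem_span_singleton.mp
          (by simpa [Ccode, Submodule.restrictScalars_mem] using hx)
        refine ⟨Ideal.Quotient.mk (Ideal.span {fpoly F ω}) (p * (X + X ^ 2 + X ^ 3 + Polynomial.C (ω ^ 2) * X ^ 4 : Polynomial F)), ?_⟩
        show (Ideal.Quotient.mk (Ideal.span {fpoly F ω}) (p * (X + X ^ 2 + X ^ 3 + Polynomial.C (ω ^ 2) * X ^ 4 : Polynomial F)), Ideal.Quotient.mk (Ideal.span {fpoly F ω}) (1 + X^2 + (Polynomial.C ω) + (Polynomial.C ω)*X^2 + (Polynomial.C ω)*X^3 + (Polynomial.C ω)*X^4) * Ideal.Quotient.mk (Ideal.span {fpoly F ω}) (p * (X + X ^ 2 + X ^ 3 + Polynomial.C (ω ^ 2) * X ^ 4 : Polynomial F))) = p • gel F ω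
        rw [gel, Prod.smul_mk, Prod.mk.injEq]
        refine ⟨rfl, ?_⟩
        show Ideal.Quotient.mk (Ideal.span {fpoly F ω}) ((1 + X^2 + (Polynomial.C ω) + (Polynomial.C ω)*X^2 + (Polynomial.C ω)*X^3 + (Polynomial.C ω)*X^4) * (p * (X + X ^ 2 + X ^ 3 + Polynomial.C (ω ^ 2) * X ^ 4 : Polynomial F))) = Ideal.Quotient.mk (Ideal.span {fpoly F ω}) (p * (1 + Polynomial.C ω * X ^ 2 + Polynomial.C ω * X ^ 3 + Polynomial.C (ω ^ 2) * X ^ 4 : Polynomial F))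
        rw [Ideal.Quotient.eq, Ideal.mem_span_singleton']
        refine ⟨p * (1 + X^2 + X^3 + (Polynomial.C ω) + (Polynomial.C ω)*X + (Polynomial.C ω)*X^2), ?_⟩
        simp only [fpoly, map_pow, map_add, map_mul, map_one, map_zero]
        linear_combination ((p) * ((-1) + (-1)*X + (-1)*X^2 + X^4 + X^7 + X^8 + (-1)*(Polynomial.C ω)*X^4 + (-1)*(Polynomial.C ω)*X^6 + (-1)*(Polynomial.C ω)*X^7 + (-1)*(Polynomial.C ω)*X^8)) * hwX + ((p) * (1 + (-1)*X^3 + (-1)*X^4 + (-1)*(Polynomial.C ω)*X^3 + (-1)*(Polynomial.C ω)*X^4 + (-1)*(Polynomial.C ω)*X^5)) * h2X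
      · rintro x ⟨r, rfl⟩
        obtain ⟨p, rfl⟩ := Ideal.Quotient.mk_surjective r
        have hmem : φ (Ideal.Quotient.mk (Ideal.span {fpoly F ω}) p) = (p * (X + X^2 + X^3 + (Polynomial.C ω) + (Polynomial.C ω)*X^2 + (Polynomial.C ω)*X^3)) • gel F ω := by
          rw [gel, Prod.smul_mk, Prod.mk.injEq]
          constructor
          · show Ideal.Quotient.mk (Ideal.span {fpoly F ω}) p = Ideal.Quotient.mk (Ideal.span {fpoly F ω}) ((p * (X + X^2 + X^3 + (Polynomial.C ω) + (Polynomial.C ω)*X^2 + (Polynomial.C ω)*X^3)) * (X + X ^ 2 + X ^ 3 + Polynomial.C (ω ^ 2) * X ^ 4 : Polynomial F))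
            rw [Ideal.Quotient.eq, Ideal.mem_span_singleton']
            refine ⟨(-(p * (1 + X + (Polynomial.C ω) + (Polynomial.C ω)*X^2))), ?_⟩
            simp only [fpoly, map_pow, map_add, map_mul, map_one, map_zero]
            linear_combination (((-p)) * ((-1) + (-1)*X^2 + X^4 + (-1)*X^5 + (-1)*(Polynomial.C ω)*X^4 + (-1)*(Polynomial.C ω)*X^6 + (-1)*(Polynomial.C ω)*X^7)) * hwX + (((-p)) * (1 + (-1)*X^3 + (-2)*X^4 + (-1)*(Polynomial.C ω)*X + (-1)*(Polynomial.C ω)*X^3 + (-1)*(Polynomial.C ω)*X^4 + (Polynomial.C ω)*X^7)) * h2X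
          · show Ideal.Quotient.mk (Ideal.span {fpoly F ω}) (1 + X^2 + (Polynomial.C ω) + (Polynomial.C ω)*X^2 + (Polynomial.C ω)*X^3 + (Polynomial.C ω)*X^4) * Ideal.Quotient.mk (Ideal.span {fpoly F ω}) p = Ideal.Quotient.mk (Ideal.span {fpoly F ω}) ((p * (X + X^2 + X^3 + (Polynomial.C ω) + (Polynomial.C ω)*X^2 + (Polynomial.C ω)*X^3)) * (1 + Polynomial.C ω * X ^ 2 + Polynomial.C ω * X ^ 3 + Polynomial.C (ω ^ 2) * X ^ 4 : Polynomial F))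
            rw [← map_mul]
            rw [Ideal.Quotient.eq, Ideal.mem_span_singleton']
            refine ⟨(-(p * (1 + X + (Polynomial.C ω) + (Polynomial.C ω)*X + (Polynomial.C ω)*X^2))), ?_⟩
            simp only [fpoly, map_pow, map_add, map_mul, map_one, map_zero]
            linear_combination (((-p)) * ((-1) + (-1)*X + (-2)*X^2 + (-1)*X^3 + (-3)*X^5 + (-1)*X^6 + (-1)*(Polynomial.C ω)*X^4 + (-1)*(Polynomial.C ω)*X^6 + (-1)*(Polynomial.C ω)*X^7)) * hwX + (((-p)) * (1 + X^2 + 2*X^5 + X^6 + (Polynomial.C ω)*X^2 + (Polynomial.C ω)*X^5 + (Polynomial.C ω)*X^6 + (Polynomial.C ω)*X^7)) * h2X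
        rw [Submodule.restrictScalars_mem, hmem, Ccode]
        exact Submodule.smul_mem _ _ (Submodule.mem_span_singleton_self _)
    rw [hre, LinearMap.finrank_range_of_inj hinj]
    have hfr := (AdjoinRoot.powerBasis hfne).finrank
    have h5 : (fpoly F ω).natDegree = 5 := by rw [fpoly]; exact Polynomial.natDegree_X_pow_sub_C
    simp only [AdjoinRoot.powerBasis, h5] at hfr
    exact hfr
  · -- LCD
    intro a hmem horth
    have hblk : blk F ω a = (Ideal.Quotient.mk (Ideal.span {fpoly F ω}) (Polynomial.C (a 0) * X ^ 0 + Polynomial.C (a 1) * X ^ 1 + Polynomial.C (a 2) * X ^ 2 + Polynomial.C (a 3) * X ^ 3 + Polynomial.C (a 4) * X ^ 4), Ideal.Quotient.mk (Ideal.span {fpoly F ω}) (Polynomial.C (a 5) * X ^ 0 + Polynomial.C (a 6) * X ^ 1 + Polynomial.C (a 7) * X ^ 2 + Polynomial.C (a 8) * X ^ 3 + Polynomial.C (a 9) * X ^ 4)) := by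
      rw [blk, Fin.sum_univ_five, Fin.sum_univ_five]
      rfl
    obtain ⟨p, hp⟩ := Submodule.mem_span_singleton.mp
      (by simpa [Ccode] using hmem)
    rw [hblk] at hp
    have hp1 : Ideal.Quotient.mk (Ideal.span {fpoly F ω}) (p * (X + X ^ 2 + X ^ 3 + Polynomial.C (ω ^ 2) * X ^ 4 : Polynomial F)) = Ideal.Quotient.mk (Ideal.span {fpoly F ω}) (Polynomial.C (a 0) * X ^ 0 + Polynomial.C (a 1) * X ^ 1 + Polynomial.C (a 2) * X ^ 2 + Polynomial.C (a 3) * X ^ 3 + Polynomial.C (a 4) * X ^ 4) := congrArg Prod.fst hp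
    have hp2 : Ideal.Quotient.mk (Ideal.span {fpoly F ω}) (p * (1 + Polynomial.C ω * X ^ 2 + Polynomial.C ω * X ^ 3 + Polynomial.C (ω ^ 2) * X ^ 4 : Polynomial F)) = Ideal.Quotient.mk (Ideal.span {fpoly F ω}) (Polynomial.C (a 5) * X ^ 0 + Polynomial.C (a 6) * X ^ 1 + Polynomial.C (a 7) * X ^ 2 + Polynomial.C (a 8) * X ^ 3 + Polynomial.C (a 9) * X ^ 4) := congrArg Prod.snd hp
    have hQs : (Ideal.Quotient.mk (Ideal.span {fpoly F ω}) (Polynomial.C (a 5) * X ^ 0 + Polynomial.C (a 6) * X ^ 1 + Polynomial.C (a 7) * X ^ 2 + Polynomial.C (a 8) * X ^ 3 + Polynomial.C (a 9) * X ^ 4) : R F ω) = Ideal.Quotient.mk (Ideal.span {fpoly F ω}) ((1 + X^2 + (Polynomial.C ω) + (Polynomial.C ω)*X^2 + (Polynomial.C ω)*X^3 + (Polynomial.C ω)*X^4) * (Polynomial.C (a 0) * X ^ 0 + Polynomial.C (a 1) * X ^ 1 + Polynomial.C (a 2) * X ^ 2 + Polynomial.C (a 3) * X ^ 3 + Polynomial.C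 (a 4) * X ^ 4)) := by
      calc Ideal.Quotient.mk (Ideal.span {fpoly F ω}) (Polynomial.C (a 5) * X ^ 0 + Polynomial.C (a 6) * X ^ 1 + Polynomial.C (a 7) * X ^ 2 + Polynomial.C (a 8) * X ^ 3 + Polynomial.C (a 9) * X ^ 4) = Ideal.Quotient.mk (Ideal.span {fpoly F ω}) (p * (1 + Polynomial.C ω * X ^ 2 + Polynomial.C ω * X ^ 3 + Polynomial.C (ω ^ 2) * X ^ 4 : Polynomial F)) := hp2.symm
        _ = Ideal.Quotient.mk (Ideal.span {fpoly F ω}) p * Ideal.Quotient.mk (Ideal.span {fpoly F ω}) (1 + Polynomial.C ω * X ^ 2 + Polynomial.C ω * X ^ 3 + Polynomial.C (ω ^ 2) * X ^ 4 : Polynomial F) := map_mul _ _ _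
        _ = Ideal.Quotient.mk (Ideal.span {fpoly F ω}) p * (Ideal.Quotient.mk (Ideal.span {fpoly F ω}) ((1 + X^2 + (Polynomial.C ω) + (Polynomial.C ω)*X^2 + (Polynomial.C ω)*X^3 + (Polynomial.C ω)*X^4) * (X + X ^ 2 + X ^ 3 + Polynomial.C (ω ^ 2) * X ^ 4 : Polynomial F))) := by rw [hBs]
        _ = Ideal.Quotient.mk (Ideal.span {fpoly F ω}) (1 + X^2 + (Polynomial.C ω) + (Polynomial.C ω)*X^2 + (Polynomial.C ω)*X^3 + (Polynomial.C ω)*X^4) * (Ideal.Quotient.mk (Ideal.span {fpoly F ω}) p * Ideal.Quotient.mk (Ideal.span {fpoly F ω}) (X + X ^ 2 + X ^ 3 + Polynomial.C (ω ^ 2) * X ^ 4 : Polynomial F)) := by rw [map_mul]; ring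
        _ = Ideal.Quotient.mk (Ideal.span {fpoly F ω}) (1 + X^2 + (Polynomial.C ω) + (Polynomial.C ω)*X^2 + (Polynomial.C ω)*X^3 + (Polynomial.C ω)*X^4) * Ideal.Quotient.mk (Ideal.span {fpoly F ω}) (p * (X + X ^ 2 + X ^ 3 + Polynomial.C (ω ^ 2) * X ^ 4 : Polynomial F)) := by rw [← map_mul (Ideal.Quotient.mk (Ideal.span {fpoly F ω})) p]
        _ = Ideal.Quotient.mk (Ideal.span {fpoly F ω}) (1 + X^2 + (Polynomial.C ω) + (Polynomial.C ω)*X^2 + (Polynomial.C ω)*X^3 + (Polynomial.C ω)*X^4) * Ideal.Quotient.mk (Ideal.span {fpoly F ω}) (Polynomial.C (a 0) * X ^ 0 + Polynomial.C (a 1) * X ^ 1 + Polynomial.C (a 2) * X ^ 2 + Polynomial.C (a 3) * X ^ 3 + Polynomial.C (a 4) * X ^ 4) := by rw [hp1]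
        _ = Ideal.Quotient.mk (Ideal.span {fpoly F ω}) ((1 + X^2 + (Polynomial.C ω) + (Polynomial.C ω)*X^2 + (Polynomial.C ω)*X^3 + (Polynomial.C ω)*X^4) * (Polynomial.C (a 0) * X ^ 0 + Polynomial.C (a 1) * X ^ 1 + Polynomial.C (a 2) * X ^ 2 + Polynomial.C (a 3) * X ^ 3 + Polynomial.C (a 4) * X ^ 4)) := (map_mul _ _ _).symm
    have hsRP : (Ideal.Quotient.mk (Ideal.span {fpoly F ω}) ((1 + X^2 + (Polynomial.C ω) + (Polynomial.C ω)*X^2 + (Polynomial.C ω)*X^3 + (Polynomial.C ω)*X^4) * (Polynomial.C (a 0) * X ^ 0 + Polynomial.C (a 1) * X ^ 1 + Polynomial.C (a 2) * X ^ 2 + Polynomial.C (a 3) * X ^ 3 + Polynomial.C (a 4) * X ^ 4)) : R F ω) = Ideal.Quotient.mk (Ideal.span {fpoly F ω}) (Polynomial.C ((ω+1) * a 0 + (ω+1) * a 1 + (ω+1) * a 2 + a 3) * X ^ 0 + Polynomial.C ((ω+1) * a 1 + (ω+1) * a 2 + (ω+1) * a 3 + a 4) * X ^ 1 + Polynomial.C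 ((ω+1) * a 0 + (ω+1) * a 2 + (ω+1) * a 3 + (ω+1) * a 4) * X ^ 2 + Polynomial.C (ω * a 0 + (ω+1) * a 1 + (ω+1) * a 3 + (ω+1) * a 4) * X ^ 3 + Polynomial.C (ω * a 0 + ω * a 1 + (ω+1) * a 2 + (ω+1) * a 4) * X ^ 4) := by
      rw [Ideal.Quotient.eq, Ideal.mem_span_singleton']
      refine ⟨(Polynomial.C (a 3) + X*Polynomial.C (a 4) + (Polynomial.C ω)*Polynomial.C (a 3) + (Polynomial.C ω)*Polynomial.C (a 2) + (Polynomial.C ω)*Polynomial.C (a 1) + (Polynomial.C ω)*X*Polynomial.C (a 4) + (Polynomial.C ω)*X*Polynomial.C (a 3) + (Polynomial.C ω)*X*Polynomial.C (a 2) + (Polynomial.C ω)*X^2*Polynomial.C (a 4) + (Polynomial.C ω)*X^2*Polynomial.C (a 3) + (Polynomial.C ω)*X^3*Polynomial.C (a 4)), ?_⟩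
      simp only [fpoly, map_pow, map_add, map_mul, map_one, map_zero]
      linear_combination ((-1)*Polynomial.C (a 3) + (-1)*Polynomial.C (a 2) + (-1)*Polynomial.C (a 1) + (-1)*X*Polynomial.C (a 4) + (-1)*X*Polynomial.C (a 3) + (-1)*X*Polynomial.C (a 2) + (-1)*X^2*Polynomial.C (a 4) + (-1)*X^2*Polynomial.C (a 3) + (-1)*X^3*Polynomial.C (a 4)) * hwX + (Polynomial.C (a 3) + Polynomial.C (a 2) + Polynomial.C (a 1) + X*Polynomial.C (a 4) + X*Polynomial.C (a 3) + X*Polynomial.C (a 2) + X^2*Polynomial.C (a 4) + X^2*Polynomial.C (a 3) + X^3*Polynomial.C (a 4) + (Polynomial.C ω)*Polynomial.C (a 2) + (Polynomial.C ω)*Polynomial.C (a 1) + (Polynomial.C ω)*X*Polynomial.C (a 3) + (Polynomial.C ω)*X*Polynomial.C (a 2) + (Polynomial.C ω)*X^2*Polynomial.C (a 4) + (Polynomial.C ω)*X^2*Polynomial.C (a 3) + (Polynomial.C ω)*X^3*Polynomial.C (a 4)) * h2X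
    have hQRP : (Polynomial.C (a 5) * X ^ 0 + Polynomial.C (a 6) * X ^ 1 + Polynomial.C (a 7) * X ^ 2 + Polynomial.C (a 8) * X ^ 3 + Polynomial.C (a 9) * X ^ 4 : Polynomial F) = Polynomial.C ((ω+1) * a 0 + (ω+1) * a 1 + (ω+1) * a 2 + a 3) * X ^ 0 + Polynomial.C ((ω+1) * a 1 + (ω+1) * a 2 + (ω+1) * a 3 + a 4) * X ^ 1 + Polynomial.C ((ω+1) * a 0 + (ω+1) * a 2 + (ω+1) * a 3 + (ω+1) * a 4) * X ^ 2 + Polynomial.C (ω * a 0 + (ω+1) * a 1 + (ω+1) * a 3 + (ω+1) * a 4) * X ^ 3 + Polynomial.C (ω * a 0 + ω * a 1 + (ω+1) * a 2 + (ω+1) * a 4) * X ^ 4 := by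
      refine aux_unique F ω ?_ ?_ (hQs.trans hsRP)
      · compute_degree
      · compute_degree
    have ha0 : a 5 = (ω+1) * a 0 + (ω+1) * a 1 + (ω+1) * a 2 + a 3 := by
      have h := congrArg (fun q => Polynomial.coeff q 0) hQRP
      simp only [Polynomial.coeff_add, Polynomial.coeff_C_mul, Polynomial.coeff_X_pow] at h
      norm_num at h
      linear_combination h
    have ha1 : a 6 = (ω+1) * a 1 + (ω+1) * a 2 + (ω+1) * a 3 + a 4 := by
      have h := congrArg (fun q => Polynomial.coeff q 1) hQRP
      simp only [Polynomial.coeff_add, Polynomial.coeff_C_mul, Polynomial.coeff_X_pow] at h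
      norm_num at h
      linear_combination h
    have ha2 : a 7 = (ω+1) * a 0 + (ω+1) * a 2 + (ω+1) * a 3 + (ω+1) * a 4 := by
      have h := congrArg (fun q => Polynomial.coeff q 2) hQRP
      simp only [Polynomial.coeff_add, Polynomial.coeff_C_mul, Polynomial.coeff_X_pow] at h
      norm_num at h
      linear_combination h
    have ha3 : a 8 = ω * a 0 + (ω+1) * a 1 + (ω+1) * a 3 + (ω+1) * a 4 := by
      have h := congrArg (fun q => Polynomial.coeff q 3) hQRP
      simp only [Polynomial.coeff_add, Polynomial.coeff_C_mul, Polynomial.coeff_X_pow] at h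
      norm_num at h
      linear_combination h
    have ha4 : a 9 = ω * a 0 + ω * a 1 + (ω+1) * a 2 + (ω+1) * a 4 := by
      have h := congrArg (fun q => Polynomial.coeff q 4) hQRP
      simp only [Polynomial.coeff_add, Polynomial.coeff_C_mul, Polynomial.coeff_X_pow] at h
      norm_num at h
      linear_combination h
    have hb0 : blk F ω (![1, 0, 0, 0, 0, (ω+1), 0, (ω+1), ω, ω] : Fin 10 → F) = (Ideal.Quotient.mk (Ideal.span {fpoly F ω}) (Polynomial.C (1) * X ^ 0 + Polynomial.C (0) * X ^ 1 + Polynomial.C (0) * X ^ 2 + Polynomial.C (0) * X ^ 3 + Polynomial.C (0) * X ^ 4), Ideal.Quotient.mk (Ideal.span {fpoly F ω}) (Polynomial.C ((ω+1)) * X ^ 0 + Polynomial.C (0) * X ^ 1 + Polynomial.C ((ω+1)) * X ^ 2 + Polynomial.C (ω) * X ^ 3 + Polynomial.C (ω) * X ^ 4)) := by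
      rw [blk, Fin.sum_univ_five, Fin.sum_univ_five]
      rfl
    have hm0 : blk F ω (![1, 0, 0, 0, 0, (ω+1), 0, (ω+1), ω, ω] : Fin 10 → F) ∈ Ccode F ω := by
      rw [hb0, Ccode]
      refine Submodule.mem_span_singleton.mpr ⟨(X + X^2 + X^3 + (Polynomial.C ω) + (Polynomial.C ω)*X^2 + (Polynomial.C ω)*X^3) * X ^ 0, ?_⟩
      rw [gel, Prod.smul_mk, Prod.mk.injEq]
      constructor
      · show Ideal.Quotient.mk (Ideal.span {fpoly F ω}) (((X + X^2 + X^3 + (Polynomial.C ω) + (Polynomial.C ω)*X^2 + (Polynomial.C ω)*X^3) * X ^ 0) * (X + X ^ 2 + X ^ 3 + Polynomial.C (ω ^ 2) * X ^ 4 : Polynomial F)) = _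
        rw [Ideal.Quotient.eq, Ideal.mem_span_singleton']
        refine ⟨(1 + X + (Polynomial.C ω) + (Polynomial.C ω)*X^2), ?_⟩
        simp only [fpoly, map_pow, map_add, map_mul, map_one, map_zero]
        linear_combination ((-1) + (-1)*X^2 + X^4 + (-1)*X^5 + (-1)*(Polynomial.C ω)*X^4 + (-1)*(Polynomial.C ω)*X^6 + (-1)*(Polynomial.C ω)*X^7) * hwX + (1 + (-1)*X^3 + (-2)*X^4 + (-1)*(Polynomial.C ω)*X + (-1)*(Polynomial.C ω)*X^3 + (-1)*(Polynomial.C ω)*X^4 + (Polynomial.C ω)*X^7) * h2X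
      · show Ideal.Quotient.mk (Ideal.span {fpoly F ω}) (((X + X^2 + X^3 + (Polynomial.C ω) + (Polynomial.C ω)*X^2 + (Polynomial.C ω)*X^3) * X ^ 0) * (1 + Polynomial.C ω * X ^ 2 + Polynomial.C ω * X ^ 3 + Polynomial.C (ω ^ 2) * X ^ 4 : Polynomial F)) = _
        rw [Ideal.Quotient.eq, Ideal.mem_span_singleton']
        refine ⟨(1 + X + (Polynomial.C ω) + (Polynomial.C ω)*X + (Polynomial.C ω)*X^2), ?_⟩
        simp only [fpoly, map_pow, map_add, map_mul, map_one, map_zero]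
        linear_combination ((-1) + (-1)*X + (-2)*X^2 + (-1)*X^3 + (-3)*X^5 + (-1)*X^6 + (-1)*(Polynomial.C ω)*X^4 + (-1)*(Polynomial.C ω)*X^6 + (-1)*(Polynomial.C ω)*X^7) * hwX + (1 + X^2 + 2*X^5 + X^6 + (Polynomial.C ω)*X^2 + (Polynomial.C ω)*X^5 + (Polynomial.C ω)*X^6 + (Polynomial.C ω)*X^7) * h2X
    have e0 : a 0 * 1 + a 1 * 0 + a 2 * 0 + a 3 * 0 + a 4 * 0 + a 5 * (ω+1) + a 6 * 0 + a 7 * (ω+1) + a 8 * ω + a 9 * ω = 0 := by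
      have h := horth (![1, 0, 0, 0, 0, (ω+1), 0, (ω+1), ω, ω] : Fin 10 → F) hm0
      rw [sum10] at h
      exact h
    have hb1 : blk F ω (![0, 1, 0, 0, 0, (ω+1), (ω+1), 0, (ω+1), ω] : Fin 10 → F) = (Ideal.Quotient.mk (Ideal.span {fpoly F ω}) (Polynomial.C (0) * X ^ 0 + Polynomial.C (1) * X ^ 1 + Polynomial.C (0) * X ^ 2 + Polynomial.C (0) * X ^ 3 + Polynomial.C (0) * X ^ 4), Ideal.Quotient.mk (Ideal.span {fpoly F ω}) (Polynomial.C ((ω+1)) * X ^ 0 + Polynomial.C ((ω+1)) * X ^ 1 + Polynomial.C (0) * X ^ 2 + Polynomial.C ((ω+1)) * X ^ 3 + Polynomial.C (ω) * X ^ 4)) := by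
      rw [blk, Fin.sum_univ_five, Fin.sum_univ_five]
      rfl
    have hm1 : blk F ω (![0, 1, 0, 0, 0, (ω+1), (ω+1), 0, (ω+1), ω] : Fin 10 → F) ∈ Ccode F ω := by
      rw [hb1, Ccode]
      refine Submodule.mem_span_singleton.mpr ⟨(X + X^2 + X^3 + (Polynomial.C ω) + (Polynomial.C ω)*X^2 + (Polynomial.C ω)*X^3) * X ^ 1, ?_⟩
      rw [gel, Prod.smul_mk, Prod.mk.injEq]
      constructor
      · show Ideal.Quotient.mk (Ideal.span {fpoly F ω}) (((X + X^2 + X^3 + (Polynomial.C ω) + (Polynomial.C ω)*X^2 + (Polynomial.C ω)*X^3) * X ^ 1) * (X + X ^ 2 + X ^ 3 + Polynomial.C (ω ^ 2) * X ^ 4 : Polynomial F)) = _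
        rw [Ideal.Quotient.eq, Ideal.mem_span_singleton']
        refine ⟨(X + X^2 + (Polynomial.C ω)*X + (Polynomial.C ω)*X^3), ?_⟩
        simp only [fpoly, map_pow, map_add, map_mul, map_one, map_zero]
        linear_combination ((-1)*X + (-1)*X^3 + X^5 + (-1)*X^6 + (-1)*(Polynomial.C ω)*X^5 + (-1)*(Polynomial.C ω)*X^7 + (-1)*(Polynomial.C ω)*X^8) * hwX + (X + (-1)*X^4 + (-2)*X^5 + (-1)*(Polynomial.C ω)*X^2 + (-1)*(Polynomial.C ω)*X^4 + (-1)*(Polynomial.C ω)*X^5 + (Polynomial.C ω)*X^8) * h2X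
      · show Ideal.Quotient.mk (Ideal.span {fpoly F ω}) (((X + X^2 + X^3 + (Polynomial.C ω) + (Polynomial.C ω)*X^2 + (Polynomial.C ω)*X^3) * X ^ 1) * (1 + Polynomial.C ω * X ^ 2 + Polynomial.C ω * X ^ 3 + Polynomial.C (ω ^ 2) * X ^ 4 : Polynomial F)) = _
        rw [Ideal.Quotient.eq, Ideal.mem_span_singleton']
        refine ⟨(X + X^2 + (Polynomial.C ω) + (Polynomial.C ω)*X + (Polynomial.C ω)*X^2 + (Polynomial.C ω)*X^3), ?_⟩
        simp only [fpoly, map_pow, map_add, map_mul, map_one, map_zero]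
        linear_combination ((-1) + (-1)*X + (-1)*X^2 + (-2)*X^3 + (-1)*X^4 + (-3)*X^6 + (-1)*X^7 + (-1)*(Polynomial.C ω)*X^5 + (-1)*(Polynomial.C ω)*X^7 + (-1)*(Polynomial.C ω)*X^8) * hwX + (1 + X + X^3 + 2*X^6 + X^7 + (Polynomial.C ω) + (Polynomial.C ω)*X^3 + (Polynomial.C ω)*X^6 + (Polynomial.C ω)*X^7 + (Polynomial.C ω)*X^8) * h2X
    have e1 : a 0 * 0 + a 1 * 1 + a 2 * 0 + a 3 * 0 + a 4 * 0 + a 5 * (ω+1) + a 6 * (ω+1) + a 7 * 0 + a 8 * (ω+1) + a 9 * ω = 0 := by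
      have h := horth (![0, 1, 0, 0, 0, (ω+1), (ω+1), 0, (ω+1), ω] : Fin 10 → F) hm1
      rw [sum10] at h
      exact h
    have hb2 : blk F ω (![0, 0, 1, 0, 0, (ω+1), (ω+1), (ω+1), 0, (ω+1)] : Fin 10 → F) = (Ideal.Quotient.mk (Ideal.span {fpoly F ω}) (Polynomial.C (0) * X ^ 0 + Polynomial.C (0) * X ^ 1 + Polynomial.C (1) * X ^ 2 + Polynomial.C (0) * X ^ 3 + Polynomial.C (0) * X ^ 4), Ideal.Quotient.mk (Ideal.span {fpoly F ω}) (Polynomial.C ((ω+1)) * X ^ 0 + Polynomial.C ((ω+1)) * X ^ 1 + Polynomial.C ((ω+1)) * X ^ 2 + Polynomial.C (0) * X ^ 3 + Polynomial.C ((ω+1)) * X ^ 4)) := by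
      rw [blk, Fin.sum_univ_five, Fin.sum_univ_five]
      rfl
    have hm2 : blk F ω (![0, 0, 1, 0, 0, (ω+1), (ω+1), (ω+1), 0, (ω+1)] : Fin 10 → F) ∈ Ccode F ω := by
      rw [hb2, Ccode]
      refine Submodule.mem_span_singleton.mpr ⟨(X + X^2 + X^3 + (Polynomial.C ω) + (Polynomial.C ω)*X^2 + (Polynomial.C ω)*X^3) * X ^ 2, ?_⟩
      rw [gel, Prod.smul_mk, Prod.mk.injEq]
      constructor
      · show Ideal.Quotient.mk (Ideal.span {fpoly F ω}) (((X + X^2 + X^3 + (Polynomial.C ω) + (Polynomial.C ω)*X^2 + (Polynomial.C ω)*X^3) * X ^ 2) * (X + X ^ 2 + X ^ 3 + Polynomial.C (ω ^ 2) * X ^ 4 : Polynomial F)) = _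
        rw [Ideal.Quotient.eq, Ideal.mem_span_singleton']
        refine ⟨(X^2 + X^3 + (Polynomial.C ω)*X^2 + (Polynomial.C ω)*X^4), ?_⟩
        simp only [fpoly, map_pow, map_add, map_mul, map_one, map_zero]
        linear_combination ((-1)*X^2 + (-1)*X^4 + X^6 + (-1)*X^7 + (-1)*(Polynomial.C ω)*X^6 + (-1)*(Polynomial.C ω)*X^8 + (-1)*(Polynomial.C ω)*X^9) * hwX + (X^2 + (-1)*X^5 + (-2)*X^6 + (-1)*(Polynomial.C ω)*X^3 + (-1)*(Polynomial.C ω)*X^5 + (-1)*(Polynomial.C ω)*X^6 + (Polynomial.C ω)*X^9) * h2X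
      · show Ideal.Quotient.mk (Ideal.span {fpoly F ω}) (((X + X^2 + X^3 + (Polynomial.C ω) + (Polynomial.C ω)*X^2 + (Polynomial.C ω)*X^3) * X ^ 2) * (1 + Polynomial.C ω * X ^ 2 + Polynomial.C ω * X ^ 3 + Polynomial.C (ω ^ 2) * X ^ 4 : Polynomial F)) = _
        rw [Ideal.Quotient.eq, Ideal.mem_span_singleton']
        refine ⟨(X^2 + X^3 + (Polynomial.C ω) + (Polynomial.C ω)*X + (Polynomial.C ω)*X^2 + (Polynomial.C ω)*X^3 + (Polynomial.C ω)*X^4), ?_⟩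
        simp only [fpoly, map_pow, map_add, map_mul, map_one, map_zero]
        linear_combination ((-1) + (-1)*X + (-1)*X^2 + (-1)*X^3 + (-2)*X^4 + (-1)*X^5 + (-3)*X^7 + (-1)*X^8 + (-1)*(Polynomial.C ω)*X^6 + (-1)*(Polynomial.C ω)*X^8 + (-1)*(Polynomial.C ω)*X^9) * hwX + (1 + X + X^2 + X^4 + 2*X^7 + X^8 + (Polynomial.C ω) + (Polynomial.C ω)*X + (Polynomial.C ω)*X^4 + (Polynomial.C ω)*X^7 + (Polynomial.C ω)*X^8 + (Polynomial.C ω)*X^9) * h2X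
    have e2 : a 0 * 0 + a 1 * 0 + a 2 * 1 + a 3 * 0 + a 4 * 0 + a 5 * (ω+1) + a 6 * (ω+1) + a 7 * (ω+1) + a 8 * 0 + a 9 * (ω+1) = 0 := by
      have h := horth (![0, 0, 1, 0, 0, (ω+1), (ω+1), (ω+1), 0, (ω+1)] : Fin 10 → F) hm2
      rw [sum10] at h
      exact h
    have hb3 : blk F ω (![0, 0, 0, 1, 0, 1, (ω+1), (ω+1), (ω+1), 0] : Fin 10 → F) = (Ideal.Quotient.mk (Ideal.span {fpoly F ω}) (Polynomial.C (0) * X ^ 0 + Polynomial.C (0) * X ^ 1 + Polynomial.C (0) * X ^ 2 + Polynomial.C (1) * X ^ 3 + Polynomial.C (0) * X ^ 4), Ideal.Quotient.mk (Ideal.span {fpoly F ω}) (Polynomial.C (1) * X ^ 0 + Polynomial.C ((ω+1)) * X ^ 1 + Polynomial.C ((ω+1)) * X ^ 2 + Polynomial.C ((ω+1)) * X ^ 3 + Polynomial.C (0) * X ^ 4)) := by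
      rw [blk, Fin.sum_univ_five, Fin.sum_univ_five]
      rfl
    have hm3 : blk F ω (![0, 0, 0, 1, 0, 1, (ω+1), (ω+1), (ω+1), 0] : Fin 10 → F) ∈ Ccode F ω := by
      rw [hb3, Ccode]
      refine Submodule.mem_span_singleton.mpr ⟨(X + X^2 + X^3 + (Polynomial.C ω) + (Polynomial.C ω)*X^2 + (Polynomial.C ω)*X^3) * X ^ 3, ?_⟩
      rw [gel, Prod.smul_mk, Prod.mk.injEq]
      constructor
      · show Ideal.Quotient.mk (Ideal.span {fpoly F ω}) (((X + X^2 + X^3 + (Polynomial.C ω) + (Polynomial.C ω)*X^2 + (Polynomial.C ω)*X^3) * X ^ 3) * (X + X ^ 2 + X ^ 3 + Polynomial.C (ω ^ 2) * X ^ 4 : Polynomial F)) = _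
        rw [Ideal.Quotient.eq, Ideal.mem_span_singleton']
        refine ⟨(X^3 + X^4 + (Polynomial.C ω)*X^3 + (Polynomial.C ω)*X^5), ?_⟩
        simp only [fpoly, map_pow, map_add, map_mul, map_one, map_zero]
        linear_combination ((-1)*X^3 + (-1)*X^5 + X^7 + (-1)*X^8 + (-1)*(Polynomial.C ω)*X^7 + (-1)*(Polynomial.C ω)*X^9 + (-1)*(Polynomial.C ω)*X^10) * hwX + (X^3 + (-1)*X^6 + (-2)*X^7 + (-1)*(Polynomial.C ω)*X^4 + (-1)*(Polynomial.C ω)*X^6 + (-1)*(Polynomial.C ω)*X^7 + (Polynomial.C ω)*X^10) * h2X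
      · show Ideal.Quotient.mk (Ideal.span {fpoly F ω}) (((X + X^2 + X^3 + (Polynomial.C ω) + (Polynomial.C ω)*X^2 + (Polynomial.C ω)*X^3) * X ^ 3) * (1 + Polynomial.C ω * X ^ 2 + Polynomial.C ω * X ^ 3 + Polynomial.C (ω ^ 2) * X ^ 4 : Polynomial F)) = _
        rw [Ideal.Quotient.eq, Ideal.mem_span_singleton']
        refine ⟨(1 + X^3 + X^4 + (Polynomial.C ω) + (Polynomial.C ω)*X + (Polynomial.C ω)*X^2 + (Polynomial.C ω)*X^3 + (Polynomial.C ω)*X^4 + (Polynomial.C ω)*X^5), ?_⟩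
        simp only [fpoly, map_pow, map_add, map_mul, map_one, map_zero]
        linear_combination ((-1) + (-1)*X + (-1)*X^2 + (-1)*X^3 + (-1)*X^4 + (-2)*X^5 + (-1)*X^6 + (-3)*X^8 + (-1)*X^9 + (-1)*(Polynomial.C ω)*X^7 + (-1)*(Polynomial.C ω)*X^9 + (-1)*(Polynomial.C ω)*X^10) * hwX + (1 + X + X^2 + X^3 + X^5 + 2*X^8 + X^9 + (Polynomial.C ω)*X + (Polynomial.C ω)*X^2 + (Polynomial.C ω)*X^5 + (Polynomial.C ω)*X^8 + (Polynomial.C ω)*X^9 + (Polynomial.C ω)*X^10) * h2X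
    have e3 : a 0 * 0 + a 1 * 0 + a 2 * 0 + a 3 * 1 + a 4 * 0 + a 5 * 1 + a 6 * (ω+1) + a 7 * (ω+1) + a 8 * (ω+1) + a 9 * 0 = 0 := by
      have h := horth (![0, 0, 0, 1, 0, 1, (ω+1), (ω+1), (ω+1), 0] : Fin 10 → F) hm3
      rw [sum10] at h
      exact h
    have hb4 : blk F ω (![0, 0, 0, 0, 1, 0, 1, (ω+1), (ω+1), (ω+1)] : Fin 10 → F) = (Ideal.Quotient.mk (Ideal.span {fpoly F ω}) (Polynomial.C (0) * X ^ 0 + Polynomial.C (0) * X ^ 1 + Polynomial.C (0) * X ^ 2 + Polynomial.C (0) * X ^ 3 + Polynomial.C (1) * X ^ 4), Ideal.Quotient.mk (Ideal.span {fpoly F ω}) (Polynomial.C (0) * X ^ 0 + Polynomial.C (1) * X ^ 1 + Polynomial.C ((ω+1)) * X ^ 2 + Polynomial.C ((ω+1)) * X ^ 3 + Polynomial.C ((ω+1)) * X ^ 4)) := by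
      rw [blk, Fin.sum_univ_five, Fin.sum_univ_five]
      rfl
    have hm4 : blk F ω (![0, 0, 0, 0, 1, 0, 1, (ω+1), (ω+1), (ω+1)] : Fin 10 → F) ∈ Ccode F ω := by
      rw [hb4, Ccode]
      refine Submodule.mem_span_singleton.mpr ⟨(X + X^2 + X^3 + (Polynomial.C ω) + (Polynomial.C ω)*X^2 + (Polynomial.C ω)*X^3) * X ^ 4, ?_⟩
      rw [gel, Prod.smul_mk, Prod.mk.injEq]
      constructor
      · show Ideal.Quotient.mk (Ideal.span {fpoly F ω}) (((X + X^2 + X^3 + (Polynomial.C ω) + (Polynomial.C ω)*X^2 + (Polynomial.C ω)*X^3) * X ^ 4) * (X + X ^ 2 + X ^ 3 + Polynomial.C (ω ^ 2) * X ^ 4 : Polynomial F)) = _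
        rw [Ideal.Quotient.eq, Ideal.mem_span_singleton']
        refine ⟨(X^4 + X^5 + (Polynomial.C ω)*X^4 + (Polynomial.C ω)*X^6), ?_⟩
        simp only [fpoly, map_pow, map_add, map_mul, map_one, map_zero]
        linear_combination ((-1)*X^4 + (-1)*X^6 + X^8 + (-1)*X^9 + (-1)*(Polynomial.C ω)*X^8 + (-1)*(Polynomial.C ω)*X^10 + (-1)*(Polynomial.C ω)*X^11) * hwX + (X^4 + (-1)*X^7 + (-2)*X^8 + (-1)*(Polynomial.C ω)*X^5 + (-1)*(Polynomial.C ω)*X^7 + (-1)*(Polynomial.C ω)*X^8 + (Polynomial.C ω)*X^11) * h2X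
      · show Ideal.Quotient.mk (Ideal.span {fpoly F ω}) (((X + X^2 + X^3 + (Polynomial.C ω) + (Polynomial.C ω)*X^2 + (Polynomial.C ω)*X^3) * X ^ 4) * (1 + Polynomial.C ω * X ^ 2 + Polynomial.C ω * X ^ 3 + Polynomial.C (ω ^ 2) * X ^ 4 : Polynomial F)) = _
        rw [Ideal.Quotient.eq, Ideal.mem_span_singleton']
        refine ⟨(X + X^4 + X^5 + (Polynomial.C ω)*X + (Polynomial.C ω)*X^2 + (Polynomial.C ω)*X^3 + (Polynomial.C ω)*X^4 + (Polynomial.C ω)*X^5 + (Polynomial.C ω)*X^6), ?_⟩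
        simp only [fpoly, map_pow, map_add, map_mul, map_one, map_zero]
        linear_combination ((-1)*X + (-1)*X^2 + (-1)*X^3 + (-1)*X^4 + (-1)*X^5 + (-2)*X^6 + (-1)*X^7 + (-3)*X^9 + (-1)*X^10 + (-1)*(Polynomial.C ω)*X^8 + (-1)*(Polynomial.C ω)*X^10 + (-1)*(Polynomial.C ω)*X^11) * hwX + (X + X^2 + X^3 + X^4 + X^6 + 2*X^9 + X^10 + (Polynomial.C ω)*X^2 + (Polynomial.C ω)*X^3 + (Polynomial.C ω)*X^6 + (Polynomial.C ω)*X^9 + (Polynomial.C ω)*X^10 + (Polynomial.C ω)*X^11) * h2X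
    have e4 : a 0 * 0 + a 1 * 0 + a 2 * 0 + a 3 * 0 + a 4 * 1 + a 5 * 0 + a 6 * 1 + a 7 * (ω+1) + a 8 * (ω+1) + a 9 * (ω+1) = 0 := by
      have h := horth (![0, 0, 0, 0, 1, 0, 1, (ω+1), (ω+1), (ω+1)] : Fin 10 → F) hm4
      rw [sum10] at h
      exact h
    funext k
    fin_cases k
    · show a 0 = (0 : F)
      linear_combination ω * ha0 + ha1 + ha2 + (ω+1) * e0 + ω * e1 + e2 + ω * e3 + ω * e4 + ((-3)*a 9 + (-4)*a 8 + (-3)*a 7 + (-2)*a 6 + (-2)*a 5 + a 2 + a 1 + a 0) * hω + (a 9 + 2*a 8 + a 4 + a 3 + (-1)*ω*a 7 + (-1)*ω*a 6 + (-2)*ω*a 5 + ω*a 3 + ω*a 2) * h2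
    · show a 1 = (0 : F)
      linear_combination (ω+1) * ha0 + (ω+1) * ha2 + ha3 + ω * e0 + ω * e3 + e4 + ((-1)*a 9 + (-2)*a 8 + (-2)*a 7 + (-1)*a 6 + (-1)*a 5 + a 4 + a 3 + 2*a 2 + a 1 + 2*a 0) * hω + (a 3 + a 1 + (-1)*ω*a 7 + (-1)*ω*a 5 + ω*a 4 + ω*a 3 + ω*a 2 + ω*a 1 + ω*a 0) * h2
    · show a 2 = (0 : F)
      linear_combination ω * ha0 + ω * ha1 + ha2 + (ω+1) * ha3 + ha4 + e0 + e2 + ω * e3 + ((-1)*a 8 + (-1)*a 7 + (-1)*a 6 + a 4 + 2*a 3 + 2*a 2 + 3*a 1 + 2*a 0) * hω + ((-1)*a 9 + (-1)*a 7 + (-1)*a 5 + a 4 + (-1)*a 1 + (-1)*a 0 + (-1)*ω*a 9 + (-1)*ω*a 8 + (-1)*ω*a 7 + (-1)*ω*a 6 + (-2)*ω*a 5 + 2*ω*a 4 + ω*a 3 + ω*a 2 + ω*a 1 + ω*a 0) * h2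
    · show a 3 = (0 : F)
      linear_combination ω * ha0 + ω * ha1 + ω * ha2 + ha4 + ω * e0 + ω * e1 + ω * e2 + (ω+1) * e3 + ((-3)*a 9 + (-3)*a 8 + (-3)*a 7 + (-3)*a 6 + (-3)*a 5 + a 4 + 2*a 3 + 3*a 2 + 2*a 1 + 2*a 0) * hω + (a 9 + a 8 + a 7 + a 6 + a 5 + (-1)*a 3 + (-1)*a 2 + (-1)*a 1 + (-1)*a 0 + ω*a 9 + (-1)*ω*a 7 + (-1)*ω*a 6 + (-1)*ω*a 5 + ω*a 4) * h2
    · show a 4 = (0 : F)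
      linear_combination ω * ha0 + ω * ha1 + ω * ha2 + (ω+1) * ha3 + ω * ha4 + ω * e0 + e1 + e4 + ((-1)*a 9 + (-1)*a 8 + (-1)*a 7 + (-1)*a 5 + 3*a 4 + 3*a 3 + 4*a 2 + 4*a 1 + 4*a 0) * hω + ((-1)*a 8 + (-1)*a 6 + (-1)*a 4 + (-1)*a 3 + (-2)*a 2 + (-2)*a 1 + (-2)*a 0 + (-1)*ω*a 9 + (-1)*ω*a 8 + (-1)*ω*a 7 + (-1)*ω*a 6 + (-1)*ω*a 5 + ω*a 4 + ω*a 3 + (-1)*ω*a 0) * h2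
    · show a 5 = (0 : F)
      linear_combination ha0 + ha3 + ω * ha4 + ω * e0 + (ω+1) * e1 + ω * e2 + ω * e3 + ω * e4 + ((-4)*a 9 + (-4)*a 8 + (-4)*a 7 + (-3)*a 6 + (-3)*a 5 + a 4 + a 2 + a 1 + a 0) * hω + (2*a 9 + a 8 + 2*a 7 + a 6 + a 5 + a 3 + (-1)*ω*a 6 + (-1)*ω*a 5) * h2
    · show a 6 = (0 : F)
      linear_combination (ω+1) * ha1 + ω * ha2 + ω * ha3 + ω * ha4 + e0 + ω * e2 + ω * e3 + ω * e4 + ((-2)*a 9 + (-2)*a 8 + (-3)*a 7 + (-2)*a 6 + (-1)*a 5 + 3*a 4 + 3*a 3 + 3*a 2 + 3*a 1 + 3*a 0) * hω + (a 9 + a 8 + a 7 + a 6 + (-1)*a 4 + (-1)*a 3 + (-1)*a 2 + (-1)*a 1 + (-2)*a 0 + (-1)*ω*a 9 + (-1)*ω*a 8 + (-1)*ω*a 7 + (-1)*ω*a 6 + (-1)*ω*a 5 + (-1)*ω*a 0) * h2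
    · show a 7 = (0 : F)
      linear_combination ω * ha1 + ha2 + ha4 + e0 + (ω+1) * e1 + e2 + ω * e3 + ω * e4 + ((-2)*a 9 + (-3)*a 8 + (-2)*a 7 + (-2)*a 6 + (-1)*a 5 + a 3 + a 2 + a 1) * hω + (a 8 + (-1)*a 5 + a 4 + (-1)*a 1 + (-1)*ω*a 9 + (-1)*ω*a 8 + (-1)*ω*a 7 + (-2)*ω*a 6 + (-2)*ω*a 5 + ω*a 4 + ω*a 2 + ω*a 0) * h2
    · show a 8 = (0 : F)
      linear_combination ha0 + ω * ha1 + ω * ha4 + e1 + (ω+1) * e2 + (ω+1) * e4 + ((-2)*a 9 + (-1)*a 8 + (-2)*a 7 + (-1)*a 6 + (-1)*a 5 + a 4 + a 3 + 2*a 2 + 2*a 1 + a 0) * hω + ((-1)*a 6 + (-1)*a 5 + (-1)*a 4 + (-1)*a 2 + (-1)*a 1 + (-2)*ω*a 9 + (-1)*ω*a 8 + (-1)*ω*a 7 + (-2)*ω*a 6 + (-1)*ω*a 5) * h2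
    · show a 9 = (0 : F)
      linear_combination ω * ha0 + ω * ha1 + ha2 + ω * ha3 + (ω+1) * ha4 + e2 + e3 + ω * e4 + ((-1)*a 9 + (-1)*a 8 + (-1)*a 7 + 2*a 4 + 2*a 3 + 3*a 2 + 4*a 1 + 3*a 0) * hω + ((-1)*a 7 + (-1)*a 6 + (-1)*a 5 + (-1)*a 3 + (-1)*a 2 + (-2)*a 1 + (-1)*a 0 + (-1)*ω*a 9 + (-1)*ω*a 8 + (-1)*ω*a 7 + (-2)*ω*a 6 + (-1)*ω*a 5 + ω*a 4 + ω*a 3 + ω*a 2) * h2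
  · -- projection 1
    rw [Ccode, Submodule.map_span, Set.image_singleton, Submodule.eq_top_iff']
    intro x
    obtain ⟨p, rfl⟩ := Ideal.Quotient.mk_surjective x
    refine Submodule.mem_span_singleton.mpr ⟨p * (X + X^2 + X^3 + (Polynomial.C ω) + (Polynomial.C ω)*X^2 + (Polynomial.C ω)*X^3), ?_⟩
    show Ideal.Quotient.mk (Ideal.span {fpoly F ω}) ((p * (X + X^2 + X^3 + (Polynomial.C ω) + (Polynomial.C ω)*X^2 + (Polynomial.C ω)*X^3)) * (X + X ^ 2 + X ^ 3 + Polynomial.C (ω ^ 2) * X ^ 4 : Polynomial F)) = Ideal.Quotient.mk (Ideal.span {fpoly F ω}) p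
    rw [Ideal.Quotient.eq, Ideal.mem_span_singleton']
    refine ⟨p * (1 + X + (Polynomial.C ω) + (Polynomial.C ω)*X^2), ?_⟩
    simp only [fpoly, map_pow, map_add, map_mul, map_one, map_zero]
    linear_combination ((p) * ((-1) + (-1)*X^2 + X^4 + (-1)*X^5 + (-1)*(Polynomial.C ω)*X^4 + (-1)*(Polynomial.C ω)*X^6 + (-1)*(Polynomial.C ω)*X^7)) * hwX + ((p) * (1 + (-1)*X^3 + (-2)*X^4 + (-1)*(Polynomial.C ω)*X + (-1)*(Polynomial.C ω)*X^3 + (-1)*(Polynomial.C ω)*X^4 + (Polynomial.C ω)*X^7)) * h2X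
  · -- projection 2
    rw [Ccode, Submodule.map_span, Set.image_singleton, Submodule.eq_top_iff']
    intro x
    obtain ⟨p, rfl⟩ := Ideal.Quotient.mk_surjective x
    refine Submodule.mem_span_singleton.mpr ⟨p * (X + X^3 + (Polynomial.C ω) + (Polynomial.C ω)*X^2), ?_⟩
    show Ideal.Quotient.mk (Ideal.span {fpoly F ω}) ((p * (X + X^3 + (Polynomial.C ω) + (Polynomial.C ω)*X^2)) * (1 + Polynomial.C ω * X ^ 2 + Polynomial.C ω * X ^ 3 + Polynomial.C (ω ^ 2) * X ^ 4 : Polynomial F)) = Ideal.Quotient.mk (Ideal.span {fpoly F ω}) p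
    rw [Ideal.Quotient.eq, Ideal.mem_span_singleton']
    refine ⟨p * (X + X^2 + (Polynomial.C ω) + (Polynomial.C ω)*X + (Polynomial.C ω)*X^2), ?_⟩
    simp only [fpoly, map_pow, map_add, map_mul, map_one, map_zero]
    linear_combination ((p) * ((-1) + (-1)*X + (-2)*X^2 + (-1)*X^3 + (-2)*X^5 + X^6 + (-1)*X^7 + (-1)*(Polynomial.C ω)*X^4 + (-1)*(Polynomial.C ω)*X^6)) * hwX + ((p) * (1 + X^2 + X^5 + X^7 + (Polynomial.C ω)*X^5 + (Polynomial.C ω)*X^7)) * h2X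
  · refine ⟨X + X^2 + X^3 + (Polynomial.C ω) + (Polynomial.C ω)*X^2 + (Polynomial.C ω)*X^3, 1 + X + (Polynomial.C ω) + (Polynomial.C ω)*X^2, ?_⟩
    simp only [fpoly, map_pow, map_add, map_mul, map_one, map_zero]
    linear_combination ((-1) + (-1)*X^2 + (-1)*X^4 + X^5 + (Polynomial.C ω)*X^4 + (Polynomial.C ω)*X^6 + (Polynomial.C ω)*X^7) * hwX + (X^2 + X^3 + 2*X^4 + X^5 + X^6 + (Polynomial.C ω)*X^2 + (Polynomial.C ω)*X^3 + (Polynomial.C ω)*X^4 + (Polynomial.C ω)*X^5) * h2X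
  · refine ⟨X + X^3 + (Polynomial.C ω) + (Polynomial.C ω)*X^2, X + X^2 + (Polynomial.C ω) + (Polynomial.C ω)*X + (Polynomial.C ω)*X^2, ?_⟩
    simp only [fpoly, map_pow, map_add, map_mul, map_one, map_zero]
    linear_combination ((-1) + (-1)*X + X^3 + 2*X^5 + (-1)*X^6 + X^7 + (Polynomial.C ω)*X^4 + (Polynomial.C ω)*X^6) * hwX + (X + (-1)*X^5 + X^6 + (Polynomial.C ω) + (Polynomial.C ω)*X^6) * h2X
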